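/- Let n ≥ 1 and let p, q, a₀ ∈ ℤ[X_{n-1}] satisfy p² − X_n²·q² = 1, q·a₀ = p − 1 (i.e. q divides p − 1 in ℤ[X_{n-1}]), and p·q > 0. Then the periodic continued fraction [a₀, q, 2a₀, q, 2a₀, …] (i.e. the sequence c with c₀ = a₀, c_{2k+1} = q and c_{2k+2} = 2a₀ for all k ≥ 0) converges to X_n. -/

import Mathlib

set_option maxHeartbeats 1000000


/-- `X n = 2 cos(2π/2^(n+2))`. -/
noncomputable def X (n : ℕ) : ℝ := 2 * Real.cos (2 * Real.pi / 2 ^ (n + 2))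

/-- Convergent numerators: `cfNum c (k+1) = p_k`, with `cfNum c 0 = p_{-1} = 1`. -/
noncomputable def cfNum (c : ℕ → ℝ) : ℕ → ℝ
  | 0 => 1
  | 1 => c 0
  | (k + 2) => c (k + 1) * cfNum c (k + 1) + cfNum c k

/-- Convergent denominators: `cfDen c (k+1) = q_k`, with `cfDen c 0 = q_{-1} = 0`. -/
noncomputable def cfDen (c : ℕ → ℝ) : ℕ → ℝ
  | 0 => 0
  | 1 => 1
  | (k + 2) => c (k + 1) * cfDen c (k + 1) + cfDen c k

/-- The continued fraction `[c₀, c₁, c₂, …]` converges to `x`. -/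
def CFConv (c : ℕ → ℝ) (x : ℝ) : Prop :=
  Filter.Tendsto (fun k => cfNum c (k + 1) / cfDen c (k + 1)) Filter.atTop (nhds x)

/-- Closed form for the convergents of the periodic continued fraction
`[a₀, q, 2a₀, q, 2a₀, …]` in terms of `t = p + qx` and `s = p - qx`. -/
lemma cfFormula (c : ℕ → ℝ) (p q a₀ x t s : ℝ) (hq : q ≠ 0) (hx : x ≠ 0)
    (hts : t * s = 1) (hsum : t + s = 2 * p) (hdiff : t - s = 2 * q * x)
    (hqa : q * a₀ = p - 1)
    (hc0 : c 0 = a₀) (hcodd : ∀ k, c (2 * k + 1) = q) (hceven : ∀ k, c (2 * k + 2) = 2 * a₀) :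
    ∀ m : ℕ,
      cfNum c (2*m+1) = ((t^(m+1) + s^(m+1)) - (t^m + s^m)) / (2*q) ∧
      cfDen c (2*m+1) = ((t^(m+1) - s^(m+1)) - (t^m - s^m)) / (2*x*q) ∧
      cfNum c (2*m+2) = (t^(m+1) + s^(m+1)) / 2 ∧
      cfDen c (2*m+2) = (t^(m+1) - s^(m+1)) / (2*x) := by
  intro m
  induction m with
  | zero =>
    have h1 := hcodd 0
    refine ⟨?_, ?_, ?_, ?_⟩
    · show c 0 = _
      rw [hc0]; field_simp; linear_combination 2*hqa - hsum
    · show (1:ℝ) = _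
      field_simp; linear_combination -hdiff
    · show c 1 * cfNum c 1 + cfNum c 0 = _
      show c 1 * c 0 + 1 = _
      rw [h1, hc0]; field_simp; linear_combination 2*hqa - hsum
    · show c 1 * cfDen c 1 + cfDen c 0 = _
      show c 1 * 1 + 0 = _
      rw [h1]; field_simp; linear_combination -hdiff
  | succ m ih =>
    obtain ⟨h1, h2, h3, h4⟩ := ih
    have e1 : cfNum c (2*(m+1)+1) = c (2*m+2) * cfNum c (2*m+2) + cfNum c (2*m+1) := by
      show cfNum c (2*m+1+2) = _; rw [cfNum]
    have e2 : cfDen c (2*(m+1)+1) = c (2*m+2) * cfDen c (2*m+2) + cfDen c (2*m+1) := by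
      show cfDen c (2*m+1+2) = _; rw [cfDen]
    have e3 : cfNum c (2*(m+1)+2) = c (2*(m+1)+1) * cfNum c (2*(m+1)+1) + cfNum c (2*m+2) := by
      show cfNum c (2*m+2+2) = _; rw [cfNum]; ring_nf
    have e4 : cfDen c (2*(m+1)+2) = c (2*(m+1)+1) * cfDen c (2*(m+1)+1) + cfDen c (2*m+2) := by
      show cfDen c (2*m+2+2) = _; rw [cfDen]; ring_nf
    have id1 : (t^(m+2) + s^(m+2)) - (t^(m+1) + s^(m+1))
        = 2*q*a₀*(t^(m+1) + s^(m+1)) + ((t^(m+1) + s^(m+1)) - (t^m + s^m)) := by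
      linear_combination (t^(m+1)+s^(m+1))*hsum - (t^m+s^m)*hts - 2*(t^(m+1)+s^(m+1))*hqa
    have id2 : (t^(m+2) - s^(m+2)) - (t^(m+1) - s^(m+1))
        = 2*q*a₀*(t^(m+1) - s^(m+1)) + ((t^(m+1) - s^(m+1)) - (t^m - s^m)) := by
      linear_combination (t^(m+1)-s^(m+1))*hsum - (t^m-s^m)*hts - 2*(t^(m+1)-s^(m+1))*hqa
    have hnum : cfNum c (2*(m+1)+1)
        = ((t^(m+2) + s^(m+2)) - (t^(m+1) + s^(m+1))) / (2*q) := by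
      rw [e1, hceven m, h1, h3, id1]; field_simp
    have hden : cfDen c (2*(m+1)+1)
        = ((t^(m+2) - s^(m+2)) - (t^(m+1) - s^(m+1))) / (2*x*q) := by
      rw [e2, hceven m, h2, h4, id2]; field_simp
    refine ⟨hnum, hden, ?_, ?_⟩
    · rw [e3, hcodd (m+1), hnum, h3]
      field_simp; ring
    · rw [e4, hcodd (m+1), hden, h4]
      field_simp; ring

theorem stmt4 (n : ℕ) (hn : 1 ≤ n) (p q a₀ : ℝ)
    (hp : p ∈ Algebra.adjoin ℤ ({X (n - 1)} : Set ℝ))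
    (hq : q ∈ Algebra.adjoin ℤ ({X (n - 1)} : Set ℝ))
    (ha₀ : a₀ ∈ Algebra.adjoin ℤ ({X (n - 1)} : Set ℝ))
    (hpell : p ^ 2 - X n ^ 2 * q ^ 2 = 1)
    (hdvd : q * a₀ = p - 1)
    (hpos : p * q > 0)
    (c : ℕ → ℝ) (hc0 : c 0 = a₀)
    (hcodd : ∀ k, c (2 * k + 1) = q) (hceven : ∀ k, c (2 * k + 2) = 2 * a₀) :
    CFConv c (X n) := by
  have hx : 0 < X n := by
    unfold X
    have h2 : (8:ℝ) ≤ 2 ^ (n + 2) := by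
      calc (8:ℝ) = 2^3 := by norm_num
      _ ≤ 2 ^ (n+2) := by apply pow_le_pow_right₀ (by norm_num); omega
    have hlt : 2 * Real.pi / 2 ^ (n + 2) < Real.pi / 2 := by
      rw [div_lt_div_iff₀ (by positivity) (by norm_num)]
      nlinarith [Real.pi_pos]
    have hgt : 0 < 2 * Real.pi / 2 ^ (n + 2) := by positivity
    have := Real.cos_pos_of_mem_Ioo (x := 2 * Real.pi / 2 ^ (n + 2))
      ⟨by nlinarith [Real.pi_pos], hlt⟩
    linarith
  set x := X n with hxdef
  have hq0 : q ≠ 0 := by rintro rfl; simp at hpos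
  have hxne : x ≠ 0 := ne_of_gt hx
  set t := p + q * x with htdef
  set s := p - q * x with hsdef
  have hts : t * s = 1 := by rw [htdef, hsdef]; linear_combination hpell
  have hsum : t + s = 2 * p := by rw [htdef, hsdef]; ring
  have hdiff : t - s = 2 * q * x := by rw [htdef, hsdef]; ring
  obtain ⟨ht1, hs1, htd⟩ : 1 < |t| ∧ |s| < 1 ∧ |s - 1| < |t - 1| := by
    have hxq : x * q ≠ 0 := mul_ne_zero (ne_of_gt hx) hq0
    have hxq2 : 0 < (x * q) ^ 2 := lt_of_le_of_ne (sq_nonneg _) (Ne.symm (pow_ne_zero 2 hxq))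
    rcases mul_pos_iff.mp hpos with ⟨hp', hq'⟩ | ⟨hp', hq'⟩
    · have hp1 : 1 < p := by nlinarith [hpell, sq_nonneg (p-1), sq_nonneg (p+1)]
      have ht : 1 < t := by rw [htdef]; nlinarith
      have hs0 : 0 < s := by nlinarith
      have hslt : s < 1 := by nlinarith
      refine ⟨?_, ?_, ?_⟩
      · rw [abs_of_pos (by linarith)]; exact ht
      · rw [abs_of_pos hs0]; exact hslt
      · rw [abs_of_neg (by linarith : s - 1 < 0), abs_of_pos (by linarith : (0:ℝ) < t - 1)]
        nlinarith [sq_nonneg (t - 1)]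
    · have hp1 : p < -1 := by nlinarith [hpell, sq_nonneg (p-1), sq_nonneg (p+1)]
      have ht : t < -1 := by rw [htdef]; nlinarith
      have hs0 : s < 0 := by nlinarith
      have hslt : -1 < s := by nlinarith
      refine ⟨?_, ?_, ?_⟩
      · rw [abs_of_neg (by linarith : t < 0)]; linarith
      · rw [abs_of_neg hs0]; linarith
      · rw [abs_of_neg (by linarith : s - 1 < 0), abs_of_neg (by linarith : t - 1 < 0)]
        linarith
  have key := cfFormula c p q a₀ x t s hq0 hxne hts hsum hdiff hdvd hc0 hcodd hceven
  set C : ℝ := max (2*x/(|t| - 1)) (2*x*|s-1|/(|t-1| - |s-1|)) with hCdef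
  have hD1 : (0:ℝ) < |t| - 1 := by linarith
  have hD2 : (0:ℝ) < |t-1| - |s-1| := by linarith
  have bound : ∀ k, |cfNum c (k+1)/cfDen c (k+1) - x| ≤ C * |s| ^ (k / 2) := by
    intro k
    rcases Nat.even_or_odd k with ⟨m, rfl⟩ | ⟨m, rfl⟩
    · -- k = m + m : even, use convergent (2m+1)
      obtain ⟨h1, h2, -, -⟩ := key m
      rw [show m + m + 1 = 2*m+1 by ring, show (m+m)/2 = m by omega]
      set Dn : ℝ := (t^(m+1) - s^(m+1)) - (t^m - s^m) with hDndef
      have habs : |t-1| - |s-1| ≤ |Dn| := by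
        have hr : Dn = t^m*(t-1) - s^m*(s-1) := by rw [hDndef]; ring
        have h := abs_sub_abs_le_abs_sub (t^m*(t-1)) (s^m*(s-1))
        rw [abs_mul, abs_mul, abs_pow, abs_pow] at h
        have ht' : 1 ≤ |t|^m := one_le_pow₀ (le_of_lt ht1)
        have hs' : |s|^m ≤ 1 := pow_le_one₀ (abs_nonneg s) (le_of_lt hs1)
        rw [hr]
        nlinarith [abs_nonneg (t-1), abs_nonneg (s-1)]
      have hDn0 : Dn ≠ 0 := by
        intro h; rw [h, abs_zero] at habs; linarith
      have hfx : cfNum c (2*m+1)/cfDen c (2*m+1) - x = 2*x*(s^m*(s-1))/Dn := by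
        rw [h1, h2]; field_simp; rw [hDndef]; ring
      rw [hfx, abs_div, abs_mul, abs_mul, abs_mul, abs_pow,
        abs_of_pos hx, abs_of_pos (by norm_num : (0:ℝ) < 2)]
      calc 2*x*(|s|^m*|s-1|)/|Dn| ≤ 2*x*(|s|^m*|s-1|)/(|t-1| - |s-1|) := by
            gcongr
            all_goals first | positivity | exact habs | linarith
        _ = (2*x*|s-1|/(|t-1| - |s-1|)) * |s|^m := by field_simp
        _ ≤ C * |s|^m := by
            gcongr ?_ * ?_
            all_goals first | exact le_max_right _ _ | exact le_rfl | positivity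
    · -- k = 2m+1 : odd, use convergent (2m+2)
      obtain ⟨-, -, h3, h4⟩ := key m
      rw [show 2*m+1+1 = 2*m+2 by ring, show (2*m+1)/2 = m by omega]
      set Dn : ℝ := t^(m+1) - s^(m+1) with hDndef
      have habs : |t| - 1 ≤ |Dn| := by
        have h := abs_sub_abs_le_abs_sub (t^(m+1)) (s^(m+1))
        rw [abs_pow, abs_pow] at h
        have ht' : |t| ≤ |t|^(m+1) := le_self_pow₀ (le_of_lt ht1) (by omega)
        have hs' : |s|^(m+1) ≤ 1 := pow_le_one₀ (abs_nonneg s) (le_of_lt hs1)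
        rw [hDndef]
        linarith
      have hDn0 : Dn ≠ 0 := by
        intro h; rw [h, abs_zero] at habs; linarith
      have hfx : cfNum c (2*m+2)/cfDen c (2*m+2) - x = 2*x*s^(m+1)/Dn := by
        rw [h3, h4]; field_simp; rw [hDndef]; ring
      rw [hfx, abs_div, abs_mul, abs_mul, abs_pow,
        abs_of_pos hx, abs_of_pos (by norm_num : (0:ℝ) < 2)]
      calc 2*x*|s|^(m+1)/|Dn| ≤ 2*x*|s|^(m+1)/(|t| - 1) := by
            gcongr
            all_goals first | positivity | exact habs | linarith
        _ = (2*x/(|t| - 1)) * |s|^(m+1) := by field_simp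
        _ ≤ (2*x/(|t| - 1)) * |s|^m := by
            gcongr ?_ * ?_
            · exact pow_le_pow_of_le_one (abs_nonneg s) (le_of_lt hs1) (by omega)
        _ ≤ C * |s|^m := by
            gcongr ?_ * ?_
            all_goals first | exact le_max_left _ _ | exact le_rfl | positivity
  have hC0 : Filter.Tendsto (fun k : ℕ => C * |s| ^ (k / 2)) Filter.atTop (nhds 0) := by
    have hdiv : Filter.Tendsto (fun k : ℕ => k / 2) Filter.atTop Filter.atTop :=
      Filter.tendsto_atTop_atTop.mpr fun b => ⟨2*b, fun a ha => by omega⟩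
    have hpow : Filter.Tendsto (fun m : ℕ => |s| ^ m) Filter.atTop (nhds 0) :=
      tendsto_pow_atTop_nhds_zero_of_lt_one (abs_nonneg s) hs1
    have := (hpow.comp hdiv).const_mul C
    simpa using this
  unfold CFConv
  rw [← tendsto_sub_nhds_zero_iff]
  exact squeeze_zero_norm (by simpa [Real.norm_eq_abs] using bound) hC0
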